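/- Let K be a field of characteristic ≠ 2 and let c : {0,1}³ → K with c_{ijk} ≠ 0 for all (i,j,k). Let ι be the involution of ℙ¹(K) × ℙ¹(K) × ℙ¹(K) sending ([x₀:x₁],[y₀:y₁],[z₀:z₁]) to ([x₀:−x₁],[y₀:−y₁],[z₀:−z₁]). If p is a point of (ℙ¹)³ whose homogeneous coordinates (x₀,x₁,y₀,y₁,z₀,z₁) satisfy Σ_{i,j,k ∈ {0,1}} c_{ijk} x_i² y_j² z_k² = 0, then ι(p) ≠ p. That is, ι has no fixed points on the surface S̃ = V(Σ c_{ijk} X_i²Y_j²Z_k²). -/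

import Mathlib

open Projectivization

lemma negSnd_ne_zero {K : Type*} [Field K] {x : Fin 2 → K} (hx : x ≠ 0) :
    (![x 0, -x 1] : Fin 2 → K) ≠ 0 := by
  intro h
  apply hx
  funext i
  fin_cases i
  · simpa using congrFun h 0
  · have h1 := congrFun h 1
    simp only [Matrix.cons_val_one, Matrix.head_cons, Pi.zero_apply, neg_eq_zero] at h1
    simpa using h1

lemma fixed_coord {K : Type*} [Field K] (hchar : (2 : K) ≠ 0) {x : Fin 2 → K} (hx : x ≠ 0)
    (h : Projectivization.mk K ![x 0, -x 1] (negSnd_ne_zero hx) = Projectivization.mk K x hx) :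
    x 0 = 0 ∨ x 1 = 0 := by
  rw [Projectivization.mk_eq_mk_iff] at h
  obtain ⟨a, ha⟩ := h
  have h0 : (a : K) * x 0 = x 0 := by simpa [Units.smul_def] using congrFun ha 0
  have h1 : (a : K) * x 1 = -x 1 := by simpa [Units.smul_def] using congrFun ha 1
  by_cases hx0 : x 0 = 0
  · exact Or.inl hx0
  · right
    have ha1 : (a : K) = 1 := by
      have h' : ((a : K) - 1) * x 0 = 0 := by linear_combination h0
      rcases mul_eq_zero.1 h' with h | h
      · exact sub_eq_zero.1 h
      · exact absurd h hx0
    rw [ha1, one_mul] at h1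
    have h2 : (2 : K) * x 1 = 0 := by linear_combination h1
    rcases mul_eq_zero.1 h2 with h | h
    · exact absurd h hchar
    · exact h
theorem stmt_10 {K : Type*} [Field K] (hchar : (2 : K) ≠ 0)
    (c : Fin 2 → Fin 2 → Fin 2 → K) (hc : ∀ i j k, c i j k ≠ 0)
    (x y z : Fin 2 → K) (hx : x ≠ 0) (hy : y ≠ 0) (hz : z ≠ 0)
    (hp : ∑ i, ∑ j, ∑ k, c i j k * x i ^ 2 * y j ^ 2 * z k ^ 2 = 0) :
    ¬ (Projectivization.mk K ![x 0, -x 1] (negSnd_ne_zero hx) = Projectivization.mk K x hx ∧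
       Projectivization.mk K ![y 0, -y 1] (negSnd_ne_zero hy) = Projectivization.mk K y hy ∧
       Projectivization.mk K ![z 0, -z 1] (negSnd_ne_zero hz) = Projectivization.mk K z hz) := by
  rintro ⟨h1, h2, h3⟩
  have hx' := fixed_coord hchar hx h1
  have hy' := fixed_coord hchar hy h2
  have hz' := fixed_coord hchar hz h3
  have hxne : x 0 ≠ 0 ∨ x 1 ≠ 0 := by
    by_contra h
    push_neg at h
    exact hx (funext fun i => by fin_cases i <;> simp [h.1, h.2])
  have hyne : y 0 ≠ 0 ∨ y 1 ≠ 0 := by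
    by_contra h
    push_neg at h
    exact hy (funext fun i => by fin_cases i <;> simp [h.1, h.2])
  have hzne : z 0 ≠ 0 ∨ z 1 ≠ 0 := by
    by_contra h
    push_neg at h
    exact hz (funext fun i => by fin_cases i <;> simp [h.1, h.2])
  simp only [Fin.sum_univ_two] at hp
  rcases hx' with hX | hX <;> rcases hy' with hY | hY <;> rcases hz' with hZ | hZ <;>
    rcases hxne with hXn | hXn <;> rcases hyne with hYn | hYn <;> rcases hzne with hZn | hZn <;>
      first
      | exact absurd hX hXn | exact absurd hY hYn | exact absurd hZ hZn
      | (rw [hX, hY, hZ] at hp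
         simp [mul_eq_zero, pow_eq_zero_iff (two_ne_zero), hXn, hYn, hZn, hc _ _ _] at hp)
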